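/- arXiv:2008.04831 — 2 statements merged into one kernel-verified Lean document; each statement's English description precedes it below -/
import Mathlib

section
/- Let M be a separable metric space, (Ω, F, ℙ) a probability space, and {f_ω}_{ω∈Ω} a family of continuous maps f_ω : M → M such that (ω, x) ↦ f_ω(x) is measurable. Let C = {x ∈ M : ℙ(ω : f_ω(x) = x) = 1} and assume C ≠ M. Fix a countable basis {U_k} of open sets of M and for each k let A_{U_k} = {ω : f_ω(x) ≠ x for all x ∈ U_k}. Then for every x ∈ M \ C there exists k with x ∈ U_k and ℙ(A_{U_k}) > 0. -/
open MeasureTheory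

/-- For a measurable family of continuous maps on a separable metric space, every
point outside the a.s.-common-fixed-point set C lies in a basis element U_k such
that with positive probability f_ω has no fixed point in U_k. -/
theorem exists_basis_elt_positive_measure
    {Ω : Type*} [MeasurableSpace Ω] (ℙ : Measure Ω) [IsProbabilityMeasure ℙ]
    {M : Type*} [MetricSpace M] [TopologicalSpace.SeparableSpace M]
    [MeasurableSpace M] [BorelSpace M]
    (f : Ω → M → M)
    (hmeas : Measurable (Function.uncurry f))
    (hcont : ∀ ω, Continuous (f ω))
    (C : Set M) (hCdef : C = {x : M | ℙ {ω | f ω x = x} = 1})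
    (hCne : C ≠ Set.univ)
    (U : ℕ → Set M)
    (hbasis : TopologicalSpace.IsTopologicalBasis (Set.range U))
    (A : ℕ → Set Ω)
    (hAdef : ∀ k, A k = {ω | ∀ x ∈ U k, f ω x ≠ x}) :
    ∀ x ∉ C, ∃ k : ℕ, x ∈ U k ∧ 0 < ℙ (A k) := by
  intro x hx
  by_contra h
  push_neg at h
  classical
  -- all relevant A k are null
  have hnull : ∀ k, x ∈ U k → ℙ (A k) = 0 := by
    intro k hk
    exact le_antisymm (h k hk) zero_le
  -- the set {ω | f ω x ≠ x} is contained in a countable union of null sets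
  set B : ℕ → Set Ω := fun k => if x ∈ U k then A k else ∅ with hB
  have hBnull : ∀ k, ℙ (B k) = 0 := by
    intro k
    by_cases hk : x ∈ U k
    · simp [hB, hk, hnull k hk]
    · simp [hB, hk]
  have hsub : {ω | f ω x ≠ x} ⊆ ⋃ k, B k := by
    intro ω hω
    have hopen : IsOpen {y : M | f ω y ≠ y} := by
      have : {y : M | f ω y ≠ y} = (fun y => (f ω y, y)) ⁻¹' (Set.diagonal M)ᶜ := by
        ext y; simp [Set.diagonal, eq_comm]
      rw [this]
      exact (isClosed_diagonal.isOpen_compl).preimage ((hcont ω).prodMk continuous_id)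
    obtain ⟨V, ⟨k, rfl⟩, hxV, hVsub⟩ :=
      hbasis.exists_subset_of_mem_open (show x ∈ {y : M | f ω y ≠ y} from hω) hopen
    refine Set.mem_iUnion.mpr ⟨k, ?_⟩
    simp only [hB, if_pos hxV]
    rw [hAdef]
    exact fun y hy => hVsub hy
  have hne : ℙ {ω | f ω x ≠ x} = 0 :=
    measure_mono_null hsub (measure_iUnion_null hBnull)
  -- measurability of the fixed-point event
  have hmeasset : MeasurableSet {ω | f ω x = x} := by
    have : Measurable fun ω => f ω x := hmeas.comp (measurable_id.prodMk measurable_const)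
    exact this (measurableSet_singleton x)
  have : ℙ {ω | f ω x = x} = 1 := by
    have hc : {ω | f ω x = x}ᶜ = {ω | f ω x ≠ x} := rfl
    have := prob_compl_eq_zero_iff (μ := ℙ) hmeasset
    rw [hc] at this
    exact this.mp hne
  exact hx (hCdef ▸ this)
end

section
/- Let (Ω, F, ℙ, θ) be an ergodic measure-preserving dynamical system, M a separable metric space in which every closed bounded set is compact, and {f_ω}_{ω∈Ω} a measurable family of paracontractions. Assume C = {x ∈ M : ℙ(ω : f_ω(x) = x) = 1} is non-empty. Then for every x ∈ M and ℙ-almost every ω, the sequence f^n_ω(x) = f_{θ^{n-1}(ω)} ∘ ⋯ ∘ f_ω(x) converges to some point of C. -/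
open MeasureTheory Filter

set_option linter.unusedSectionVars false
set_option maxHeartbeats 1000000

/-- The random iteration f^n_ω = f_{θ^{n-1} ω} ∘ ⋯ ∘ f_ω. -/
def randIter {Ω M : Type*} (θ : Ω → Ω) (f : Ω → M → M) : ℕ → Ω → M → M
  | 0, _, x => x
  | n + 1, ω, x => f (θ^[n] ω) (randIter θ f n ω x)

namespace RandParacontraction

variable {Ω M : Type*}

lemma randIter_add (θ : Ω → Ω) (f : Ω → M → M) (n : ℕ) :
    ∀ (m : ℕ) (ω : Ω) (x : M),
      randIter θ f m (θ^[n] ω) (randIter θ f n ω x) = randIter θ f (n + m) ω x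
  | 0, _, _ => rfl
  | m + 1, ω, x => by
    show f (θ^[m] (θ^[n] ω)) (randIter θ f m (θ^[n] ω) (randIter θ f n ω x)) = _
    rw [← Function.iterate_add_apply, randIter_add θ f n m ω x]
    show _ = f (θ^[n + m] ω) (randIter θ f (n + m) ω x)
    rw [Nat.add_comm m n]

lemma measurable_randIter [MeasurableSpace Ω] [MeasurableSpace M] [MetricSpace M] [BorelSpace M]
    (θ : Ω → Ω) (hθ : Measurable θ) (f : Ω → M → M)
    (hmeas : Measurable (Function.uncurry f)) :
    ∀ n : ℕ, Measurable (fun p : Ω × M => randIter θ f n p.1 p.2)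
  | 0 => measurable_snd
  | n + 1 => by
    have h1 : Measurable (fun p : Ω × M => ((θ^[n] p.1, randIter θ f n p.1 p.2) : Ω × M)) :=
      ((hθ.iterate n).comp measurable_fst).prodMk (measurable_randIter θ hθ f hmeas n)
    exact hmeas.comp h1

lemma continuous_randIter [MetricSpace M] (θ : Ω → Ω) (f : Ω → M → M)
    (hcont : ∀ ω, Continuous (f ω)) :
    ∀ (n : ℕ) (ω : Ω), Continuous (fun z : M => randIter θ f n ω z)
  | 0, _ => continuous_id
  | n + 1, ω => (hcont _).comp (continuous_randIter θ f hcont n ω)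

lemma ergodic_recurrence [MeasurableSpace Ω] (ℙ : Measure Ω) [IsProbabilityMeasure ℙ]
    {θ : Ω → Ω} (hθ : Ergodic θ ℙ) {A : Set Ω} (hA : MeasurableSet A) (hpos : ℙ A ≠ 0) :
    ∀ᵐ ω ∂ℙ, ∀ N : ℕ, ∃ n, N ≤ n ∧ θ^[n] ω ∈ A := by
  set U : ℕ → Set Ω := fun N => ⋃ (n : ℕ) (_ : N ≤ n), θ^[n] ⁻¹' A with hU
  have hUmeas : ∀ N, MeasurableSet (U N) := fun N =>
    MeasurableSet.iUnion fun n => MeasurableSet.iUnion fun _ => (hθ.measurable.iterate n) hA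
  set L : Set Ω := ⋂ N, U N with hL
  have hLmeas : MeasurableSet L := MeasurableSet.iInter hUmeas
  have hLinv : θ ⁻¹' L = L := by
    ext ω
    simp only [hL, hU, Set.mem_iInter, Set.mem_iUnion, Set.mem_preimage]
    constructor
    · intro h N
      obtain ⟨n, hn, hmem⟩ := h N
      exact ⟨n + 1, le_trans hn (Nat.le_succ n), by rwa [Function.iterate_succ_apply] ⟩
    · intro h N
      obtain ⟨n, hn, hmem⟩ := h (N + 1)
      refine ⟨n - 1, by omega, ?_⟩
      rw [← Function.iterate_succ_apply]
      have h2 : n - 1 + 1 = n := by omega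
      show θ^[n-1+1] ω ∈ A
      rwa [h2]
  have hLA : ℙ A ≤ ℙ L := by
    have hanti : Antitone U := by
      intro N N' hNN'
      refine Set.iUnion_mono fun n => ?_
      exact Set.iUnion_subset fun hn => Set.subset_iUnion_of_subset (le_trans hNN' hn) le_rfl
    have htend := tendsto_measure_iInter_atTop (μ := ℙ)
      (fun N => (hUmeas N).nullMeasurableSet) hanti ⟨0, measure_ne_top _ _⟩
    refine ge_of_tendsto htend (Filter.Eventually.of_forall fun N => ?_)
    have hsub : θ^[N] ⁻¹' A ⊆ U N := Set.subset_iUnion₂ (s := fun n _ => θ^[n] ⁻¹' A) N le_rfl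
    calc ℙ A = ℙ (θ^[N] ⁻¹' A) := ((hθ.toMeasurePreserving.iterate N).measure_preimage
        hA.nullMeasurableSet).symm
      _ ≤ ℙ (U N) := measure_mono hsub
  rcases hθ.ae_empty_or_univ hLmeas hLinv with h | h
  · exfalso
    have : ℙ L = 0 := by
      have := measure_congr h
      simpa using this
    exact hpos (le_antisymm (by rw [← this]; exact hLA) zero_le)
  · have : ∀ᵐ ω ∂ℙ, ω ∈ L := by
      rw [MeasureTheory.ae_iff]
      have := measure_congr h
      have huniv : ℙ L = 1 := by simpa using this
      have : ℙ Lᶜ = 0 := by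
        rw [measure_compl hLmeas (measure_ne_top _ _), huniv]
        simp
      exact this
    filter_upwards [this] with ω hω N
    simp only [hL, hU, Set.mem_iInter, Set.mem_iUnion, Set.mem_preimage] at hω
    obtain ⟨n, hn, hmem⟩ := hω N
    exact ⟨n, hn, hmem⟩

lemma zero_or_one [MeasurableSpace Ω] (ℙ : Measure Ω) [IsProbabilityMeasure ℙ]
    {θ : Ω → Ω} (hθ : Ergodic θ ℙ) {E : Set Ω} (hE : MeasurableSet E)
    (hsub : E ⊆ θ ⁻¹' E) : ℙ E = 0 ∨ ℙ E = 1 := by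
  rcases hθ.ae_empty_or_univ_of_ae_le_preimage hE.nullMeasurableSet hsub.eventuallyLE with h | h
  · left; simpa using measure_congr h
  · right; simpa using measure_congr h

lemma exists_denseSeq_subset [MetricSpace M] [TopologicalSpace.SeparableSpace M]
    (s : Set M) (hs : s.Nonempty) :
    ∃ T : ℕ → M, (∀ i, T i ∈ s) ∧ ∀ z ∈ s, ∀ ε : ℝ, 0 < ε → ∃ i, dist (T i) z < ε := by
  haveI : Nonempty s := hs.to_subtype
  haveI : SecondCountableTopology M := UniformSpace.secondCountable_of_separable M
  haveI : TopologicalSpace.SeparableSpace s := by infer_instance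
  set T0 := TopologicalSpace.denseSeq s with hT0
  refine ⟨fun i => (T0 i : M), fun i => (T0 i).2, fun z hz ε hε => ?_⟩
  have hdr := TopologicalSpace.denseRange_denseSeq s
  have : (⟨z, hz⟩ : s) ∈ closure (Set.range T0) := by
    rw [hdr.closure_range]; trivial
  rcases Metric.mem_closure_iff.1 this ε hε with ⟨w, ⟨i, rfl⟩, hw⟩
  exact ⟨i, by rw [dist_comm]; exact hw⟩


section Fixed

variable [MeasurableSpace Ω] (ℙ : Measure Ω) [IsProbabilityMeasure ℙ]
  (θ : Ω → Ω)
  [MetricSpace M] [TopologicalSpace.SeparableSpace M] [ProperSpace M]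
  [MeasurableSpace M] [BorelSpace M]
  (f : Ω → M → M)

/-- The set of `ω` such that some point of `K` is fixed by all the maps along the orbit. -/
def fixedOrbitSet (θ : Ω → Ω) (f : Ω → M → M) (K : Set M) : Set Ω :=
  {ω | ∃ z ∈ K, ∀ n : ℕ, f (θ^[n] ω) z = z}

lemma cont_unif {g : ℕ → M → M} (hg : ∀ n, Continuous (g n)) (z : M) {ε : ℝ} (hε : 0 < ε) :
    ∀ m : ℕ, ∃ δ > 0, ∀ n ≤ m, ∀ w, dist w z < δ → dist (g n w) (g n z) < ε := by
  intro m
  induction m with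
  | zero =>
    obtain ⟨δ, hδ, h⟩ := Metric.continuous_iff.1 (hg 0) z ε hε
    exact ⟨δ, hδ, fun n hn w hw => by simpa [Nat.le_zero.1 hn] using h w hw⟩
  | succ m ih =>
    obtain ⟨δ1, hδ1, h1⟩ := ih
    obtain ⟨δ2, hδ2, h2⟩ := Metric.continuous_iff.1 (hg (m + 1)) z ε hε
    refine ⟨min δ1 δ2, lt_min hδ1 hδ2, fun n hn w hw => ?_⟩
    rcases Nat.lt_or_ge n (m + 1) with h | h
    · exact h1 n (by omega) w (lt_of_lt_of_le hw (min_le_left _ _))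
    · have : n = m + 1 := by omega
      subst this
      exact h2 w (lt_of_lt_of_le hw (min_le_right _ _))

lemma meas_fixedOrbitSet (hθm : Measurable θ) (hmeas : Measurable (Function.uncurry f))
    (hcont : ∀ ω, Continuous (f ω)) (K : Set M) (hK : IsCompact K) (hKne : K.Nonempty) :
    MeasurableSet (fixedOrbitSet θ f K) := by
  obtain ⟨T, hTmem, hTdense⟩ := RandParacontraction.exists_denseSeq_subset K hKne
  have key : fixedOrbitSet θ f K =
      ⋂ (m : ℕ), ⋃ (i : ℕ), ⋂ (n : ℕ) (_ : n ≤ m),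
        {ω | dist (f (θ^[n] ω) (T i)) (T i) < 1 / (m + 1)} := by
    apply Set.Subset.antisymm
    · rintro ω ⟨z, hzK, hfix⟩
      simp only [Set.mem_iInter, Set.mem_iUnion, Set.mem_setOf_eq]
      intro m
      have hpos : (0:ℝ) < 1 / (m + 1) / 2 := by positivity
      obtain ⟨δ, hδ, hδh⟩ := cont_unif (g := fun n => f (θ^[n] ω))
        (fun n => hcont _) z hpos m
      obtain ⟨i, hi⟩ := hTdense z hzK (min δ (1 / (m + 1) / 2)) (lt_min hδ hpos)
      refine ⟨i, fun n hn => ?_⟩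
      have h1 : dist (f (θ^[n] ω) (T i)) z < 1 / (m + 1) / 2 := by
        have := hδh n hn (T i) (lt_of_lt_of_le hi (min_le_left _ _))
        rwa [hfix n] at this
      calc dist (f (θ^[n] ω) (T i)) (T i)
          ≤ dist (f (θ^[n] ω) (T i)) z + dist z (T i) := dist_triangle _ _ _
        _ < 1 / (m + 1) / 2 + 1 / (m + 1) / 2 := by
            refine add_lt_add h1 ?_
            rw [dist_comm]
            exact lt_of_lt_of_le hi (min_le_right _ _)
        _ = 1 / (m + 1) := by ring
    · intro ω hω
      simp only [Set.mem_iInter, Set.mem_iUnion, Set.mem_setOf_eq] at hω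
      choose idx hidx using hω
      set w : ℕ → M := fun m => T (idx m) with hw
      have hwK : ∀ m, w m ∈ K := fun m => hTmem _
      obtain ⟨z, hzK, φ, hφ, hconv⟩ := hK.tendsto_subseq hwK
      refine ⟨z, hzK, fun n => ?_⟩
      have hd : Tendsto (fun j => dist (f (θ^[n] ω) z) (f (θ^[n] ω) (w (φ j)))
          + 1 / (φ j + 1) + dist (w (φ j)) z) atTop (nhds 0) := by
        have t1 : Tendsto (fun j => dist (f (θ^[n] ω) z) (f (θ^[n] ω) (w (φ j))))
            atTop (nhds 0) := by
          have h : Tendsto (fun j => f (θ^[n] ω) (w (φ j))) atTop (nhds (f (θ^[n] ω) z)) :=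
            ((hcont (θ^[n] ω)).continuousAt.tendsto).comp hconv
          have h2 := Filter.Tendsto.dist
            (tendsto_const_nhds :
              Tendsto (fun _ : ℕ => f (θ^[n] ω) z) atTop (nhds (f (θ^[n] ω) z))) h
          simpa using h2
        have t2 : Tendsto (fun j => (1:ℝ) / (φ j + 1)) atTop (nhds 0) := by
          have hφtop : Tendsto φ atTop atTop := hφ.tendsto_atTop
          have := (tendsto_one_div_add_atTop_nhds_zero_nat (𝕜 := ℝ)).comp hφtop
          exact this
        have t3 : Tendsto (fun j => dist (w (φ j)) z) atTop (nhds 0) :=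
          tendsto_iff_dist_tendsto_zero.1 hconv
        have := (t1.add t2).add t3
        simpa using this
      have hle : ∀ᶠ j in atTop, dist (f (θ^[n] ω) z) z ≤
          dist (f (θ^[n] ω) z) (f (θ^[n] ω) (w (φ j))) + 1 / (φ j + 1) + dist (w (φ j)) z := by
        filter_upwards [eventually_ge_atTop n] with j hj
        have hφj : n ≤ φ j := le_trans hj (hφ.le_apply)
        have hmid : dist (f (θ^[n] ω) (w (φ j))) (w (φ j)) < 1 / (φ j + 1) :=
          hidx (φ j) n hφj
        calc dist (f (θ^[n] ω) z) z
            ≤ dist (f (θ^[n] ω) z) (f (θ^[n] ω) (w (φ j)))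
              + dist (f (θ^[n] ω) (w (φ j))) (w (φ j)) + dist (w (φ j)) z := by
              exact dist_triangle4 _ _ _ _
          _ ≤ _ := add_le_add (add_le_add le_rfl hmid.le) le_rfl
      have : dist (f (θ^[n] ω) z) z ≤ 0 := ge_of_tendsto hd hle
      have := le_antisymm this dist_nonneg
      rwa [dist_eq_zero] at this
  rw [key]
  refine MeasurableSet.iInter fun m => MeasurableSet.iUnion fun i =>
    MeasurableSet.iInter fun n => MeasurableSet.iInter fun _ => ?_
  have hmble : Measurable fun ω => dist (f (θ^[n] ω) (T i)) (T i) := by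
    have h1 : Measurable fun ω => f (θ^[n] ω) (T i) := by
      have : Measurable fun ω => ((θ^[n] ω, T i) : Ω × M) :=
        (hθm.iterate n).prodMk measurable_const
      exact hmeas.comp this
    exact h1.dist measurable_const
  exact measurableSet_lt hmble measurable_const

lemma fixedOrbitSet_subset_preimage (K : Set M) :
    fixedOrbitSet θ f K ⊆ θ ⁻¹' fixedOrbitSet θ f K := by
  rintro ω ⟨z, hz, hfix⟩
  refine ⟨z, hz, fun n => ?_⟩
  rw [← Function.iterate_succ_apply]
  exact hfix (n + 1)

lemma dist_step {g : M → M} (C : Set M) (hfix : ∀ c ∈ C, g c = c)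
    (hg : ∀ x y : M, g x = x → g y ≠ y → dist (g y) x < dist y x)
    (w : M) {c : M} (hc : c ∈ C) : dist (g w) c ≤ dist w c := by
  by_cases h : g w = w
  · rw [h]
  · exact (hg c w (hfix c hc) h).le

lemma infDist_step_le (C : Set M) (hCne : C.Nonempty) {g : M → M}
    (hfix : ∀ c ∈ C, g c = c)
    (hg : ∀ x y : M, g x = x → g y ≠ y → dist (g y) x < dist y x) (w : M) :
    Metric.infDist (g w) C ≤ Metric.infDist w C := by
  by_contra h
  push_neg at h
  obtain ⟨c, hc, hcd⟩ := (Metric.infDist_lt_iff hCne).1 h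
  have h1 : Metric.infDist (g w) C ≤ dist (g w) c := Metric.infDist_le_dist_of_mem hc
  have h2 : dist (g w) c ≤ dist w c := dist_step C hfix hg w hc
  linarith

lemma infDist_step_lt (C : Set M) (hCc : IsClosed C) (hCne : C.Nonempty) {g : M → M}
    (hfix : ∀ c ∈ C, g c = c)
    (hg : ∀ x y : M, g x = x → g y ≠ y → dist (g y) x < dist y x) (w : M)
    (hnf : g w ≠ w) : Metric.infDist (g w) C < Metric.infDist w C := by
  obtain ⟨c, hc, hceq⟩ := hCc.exists_infDist_eq_dist hCne w
  calc Metric.infDist (g w) C ≤ dist (g w) c := Metric.infDist_le_dist_of_mem hc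
    _ < dist w c := hg c w (hfix c hc) hnf
    _ = Metric.infDist w C := hceq.symm

lemma ae_fix_all (hθ : Ergodic θ ℙ) (hmeas : Measurable (Function.uncurry f))
    (hcont : ∀ ω, Continuous (f ω)) (C : Set M) (hCne : C.Nonempty)
    (hCfix : ∀ c ∈ C, ℙ {ω | f ω c = c} = 1) :
    ∀ᵐ ω ∂ℙ, ∀ (n : ℕ), ∀ c ∈ C, f (θ^[n] ω) c = c := by
  obtain ⟨T, hTmem, hTdense⟩ := RandParacontraction.exists_denseSeq_subset C hCne
  have hmeasfix : ∀ z : M, MeasurableSet {ω | f ω z = z} := by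
    intro z
    have h1 : Measurable fun ω => f ω z :=
      hmeas.comp (measurable_id.prodMk measurable_const)
    exact h1 (measurableSet_singleton z)
  have hae1 : ∀ᵐ ω ∂ℙ, ∀ (n : ℕ) (i : ℕ), f (θ^[n] ω) (T i) = T i := by
    rw [ae_all_iff]
    intro n
    rw [ae_all_iff]
    intro i
    have hpre := (hθ.toMeasurePreserving.iterate n).measure_preimage
      (hmeasfix (T i)).nullMeasurableSet
    have h2 : ℙ (θ^[n] ⁻¹' {ω | f ω (T i) = T i}) = 1 := by
      rw [hpre]; exact hCfix (T i) (hTmem i)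
    have h3 : MeasurableSet (θ^[n] ⁻¹' {ω | f ω (T i) = T i}) :=
      (hθ.measurable.iterate n) (hmeasfix (T i))
    rw [ae_iff]
    have h4 := measure_compl (μ := ℙ) h3 (measure_ne_top ℙ _)
    rw [h2] at h4
    simp only [measure_univ, tsub_self] at h4
    have h5 : {ω | ¬ f (θ^[n] ω) (T i) = T i} = (θ^[n] ⁻¹' {ω | f ω (T i) = T i})ᶜ := by
      ext ω; simp
    rw [h5, h4]
  filter_upwards [hae1] with ω hω n c hc
  have hdistlt : ∀ ε : ℝ, 0 < ε → dist (f (θ^[n] ω) c) c < ε := by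
    intro ε hε
    obtain ⟨δ, hδ, hδh⟩ := Metric.continuous_iff.1 (hcont (θ^[n] ω)) c (ε/2) (by linarith)
    obtain ⟨i, hi⟩ := hTdense c hc (min δ (ε/2)) (lt_min hδ (by linarith))
    have hic : dist (T i) c < δ := lt_of_lt_of_le hi (min_le_left _ _)
    have h1 : dist (f (θ^[n] ω) (T i)) (f (θ^[n] ω) c) < ε/2 := hδh _ hic
    calc dist (f (θ^[n] ω) c) c
        ≤ dist (f (θ^[n] ω) c) (f (θ^[n] ω) (T i)) + dist (f (θ^[n] ω) (T i)) c := dist_triangle _ _ _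
      _ = dist (f (θ^[n] ω) (T i)) (f (θ^[n] ω) c) + dist (T i) c := by
          rw [dist_comm, hω n i]
      _ < ε/2 + ε/2 := add_lt_add h1 (lt_of_lt_of_le hi (min_le_right _ _))
      _ = ε := by ring
  by_contra hne
  have : (0:ℝ) < dist (f (θ^[n] ω) c) c := dist_pos.2 hne
  exact lt_irrefl _ (hdistlt _ this)

lemma isClosed_fixedSet (hmeas : Measurable (Function.uncurry f))
    (hcont : ∀ ω, Continuous (f ω)) (C : Set M)
    (hCdef : C = {x : M | ℙ {ω | f ω x = x} = 1}) : IsClosed C := by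
  have hmeasfix : ∀ z : M, MeasurableSet {ω | f ω z = z} := by
    intro z
    have h1 : Measurable fun ω => f ω z :=
      hmeas.comp (measurable_id.prodMk measurable_const)
    exact h1 (measurableSet_singleton z)
  refine isClosed_of_closure_subset fun y hy => ?_
  obtain ⟨u, hu, hconv⟩ := mem_closure_iff_seq_limit.1 hy
  have hval : ∀ n, ℙ {ω | f ω (u n) = u n} = 1 := by
    intro n
    have := hu n
    rw [hCdef] at this
    exact this
  have hcompl : ℙ (⋃ n, {ω | f ω (u n) = u n}ᶜ) = 0 := by
    refine measure_iUnion_null fun n => ?_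
    rw [measure_compl (hmeasfix (u n)) (measure_ne_top _ _), hval n]
    simp
  have hGfull : ℙ ((⋃ n, {ω | f ω (u n) = u n}ᶜ)ᶜ) = 1 := by
    rw [measure_compl (MeasurableSet.iUnion fun n => (hmeasfix (u n)).compl)
      (measure_ne_top _ _), hcompl]
    simp
  have hsub : (⋃ n, {ω | f ω (u n) = u n}ᶜ)ᶜ ⊆ {ω | f ω y = y} := by
    intro ω hω
    rw [Set.compl_iUnion] at hω
    have hfixn : ∀ n, f ω (u n) = u n := by
      intro n
      have := Set.mem_iInter.1 hω n
      exact Set.notMem_compl_iff.1 this |>.out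
    have hlim : Tendsto (fun n => f ω (u n)) atTop (nhds (f ω y)) :=
      (hcont ω).continuousAt.tendsto.comp hconv
    have heq : (fun n => f ω (u n)) = u := funext hfixn
    rw [heq] at hlim
    exact tendsto_nhds_unique hlim hconv
  have : ℙ {ω | f ω y = y} = 1 :=
    le_antisymm prob_le_one (hGfull ▸ measure_mono hsub)
  rw [hCdef]
  exact this

lemma fixedOrbitSet_null (hθ : Ergodic θ ℙ) (hmeas : Measurable (Function.uncurry f))
    (hcont : ∀ ω, Continuous (f ω)) (K : Set M) (hK : IsCompact K)
    (hdisj : ∀ z ∈ K, ℙ {ω | f ω z = z} ≠ 1) :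
    ℙ (fixedOrbitSet θ f K) = 0 := by
  classical
  by_contra hne
  have hKne : K.Nonempty := by
    rcases Set.eq_empty_or_nonempty K with h | h
    · exfalso
      have : fixedOrbitSet θ f K = ∅ := by
        ext ω; simp [fixedOrbitSet, h]
      rw [this, measure_empty] at hne
      exact hne rfl
    · exact h
  have hEmeas := meas_fixedOrbitSet θ f hθ.measurable hmeas hcont K hK hKne
  have hone : ℙ (fixedOrbitSet θ f K) = 1 := by
    rcases zero_or_one ℙ hθ hEmeas (fixedOrbitSet_subset_preimage θ f K) with h | h
    · exact absurd h hne
    · exact h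
  have hstep : ∀ (j : ℕ) (s : Set M), IsCompact s → ℙ (fixedOrbitSet θ f s) = 1 →
      ∃ s' : Set M, IsCompact s' ∧ s' ⊆ s ∧ ℙ (fixedOrbitSet θ f s') = 1 ∧
        ∃ t, s' ⊆ Metric.closedBall t ((1/2 : ℝ) ^ j) := by
    intro j s hs hs1
    have hrpos : (0:ℝ) < (1/2 : ℝ) ^ j := by positivity
    obtain ⟨t, hts, htfin, hcover⟩ := hs.finite_cover_balls hrpos
    have hsub : fixedOrbitSet θ f s ⊆
        ⋃ y ∈ t, fixedOrbitSet θ f (s ∩ Metric.closedBall y ((1/2 : ℝ)^j)) := by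
      rintro ω ⟨z, hz, hfix⟩
      have := hcover hz
      simp only [Set.mem_iUnion] at this
      obtain ⟨y, hy, hzy⟩ := this
      exact Set.mem_biUnion hy ⟨z, ⟨hz, Metric.ball_subset_closedBall hzy⟩, hfix⟩
    have hex : ∃ y ∈ t, ℙ (fixedOrbitSet θ f (s ∩ Metric.closedBall y ((1/2:ℝ)^j))) ≠ 0 := by
      by_contra hall
      push_neg at hall
      have hz0 : ℙ (⋃ y ∈ t, fixedOrbitSet θ f (s ∩ Metric.closedBall y ((1/2:ℝ)^j))) = 0 := by
        haveI := htfin.to_subtype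
        rw [Set.biUnion_eq_iUnion]
        exact measure_iUnion_null fun y => hall y.1 y.2
      have hle := measure_mono (μ := ℙ) hsub
      rw [hz0, hs1] at hle
      simp at hle
    obtain ⟨y, hy, hyne⟩ := hex
    set s' := s ∩ Metric.closedBall y ((1/2:ℝ)^j) with hs'def
    have hs'c : IsCompact s' := hs.inter_right Metric.isClosed_closedBall
    have hs'ne : s'.Nonempty := by
      obtain ⟨ω, hω⟩ := nonempty_of_measure_ne_zero hyne
      obtain ⟨z, hz, -⟩ := hω
      exact ⟨z, hz⟩
    have hs'meas := meas_fixedOrbitSet θ f hθ.measurable hmeas hcont s' hs'c hs'ne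
    have hs'1 : ℙ (fixedOrbitSet θ f s') = 1 := by
      rcases zero_or_one ℙ hθ hs'meas (fixedOrbitSet_subset_preimage θ f s') with h | h
      · exact absurd h hyne
      · exact h
    exact ⟨s', hs'c, Set.inter_subset_left, hs'1, y, Set.inter_subset_right⟩
  have hstep' : ∀ (j : ℕ) (s : {s : Set M // IsCompact s ∧ ℙ (fixedOrbitSet θ f s) = 1}),
      ∃ s' : {s : Set M // IsCompact s ∧ ℙ (fixedOrbitSet θ f s) = 1},
        (s' : Set M) ⊆ (s : Set M) ∧
        ∃ t, (s' : Set M) ⊆ Metric.closedBall t ((1/2 : ℝ)^j) := by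
    rintro j ⟨s, hs, hs1⟩
    obtain ⟨s', h1, h2, h3, h4⟩ := hstep j s hs hs1
    exact ⟨⟨s', h1, h3⟩, h2, h4⟩
  choose F hF1 hF2 using hstep'
  let seq : ℕ → {s : Set M // IsCompact s ∧ ℙ (fixedOrbitSet θ f s) = 1} :=
    fun j => Nat.rec ⟨K, hK, hone⟩ F j
  have hnested : ∀ j, (seq (j+1)).1 ⊆ (seq j).1 := fun j => by
    have h := hF1 j (seq j); exact h
  have hball : ∀ j, ∃ t, (seq (j+1)).1 ⊆ Metric.closedBall t ((1/2:ℝ)^j) := fun j => by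
    have h := hF2 j (seq j); exact h
  have hcompact : ∀ j, IsCompact (seq j).1 := fun j => (seq j).2.1
  have hm1 : ∀ j, ℙ (fixedOrbitSet θ f (seq j).1) = 1 := fun j => (seq j).2.2
  have hnonempty : ∀ j, (seq j).1.Nonempty := by
    intro j
    obtain ⟨ω, hω⟩ := nonempty_of_measure_ne_zero (ne_of_eq_of_ne (hm1 j) one_ne_zero)
    obtain ⟨z, hz, -⟩ := hω
    exact ⟨z, hz⟩
  have hzstar : (⋂ j, (seq j).1).Nonempty :=
    IsCompact.nonempty_iInter_of_sequence_nonempty_isCompact_isClosed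
      (fun j => (seq j).1) hnested hnonempty (hcompact 0)
      (fun j => (hcompact j).isClosed)
  obtain ⟨z, hz⟩ := hzstar
  have hzK : z ∈ K := Set.mem_iInter.1 hz 0
  have hseqne : ∀ j, (seq j).1.Nonempty := hnonempty
  have hEm : ∀ j, MeasurableSet (fixedOrbitSet θ f (seq j).1) := fun j =>
    meas_fixedOrbitSet θ f hθ.measurable hmeas hcont _ (hcompact j) (hseqne j)
  have hcompl0 : ℙ (⋃ j, (fixedOrbitSet θ f (seq (j+1)).1)ᶜ) = 0 := by
    refine measure_iUnion_null fun j => ?_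
    rw [measure_compl (hEm (j+1)) (measure_ne_top _ _), hm1 (j+1)]
    simp
  have hsub2 : (⋃ j, (fixedOrbitSet θ f (seq (j+1)).1)ᶜ)ᶜ ⊆ {ω | f ω z = z} := by
    intro ω hω
    rw [Set.compl_iUnion] at hω
    have hwit : ∀ j, ∃ w, w ∈ (seq (j+1)).1 ∧ ∀ n, f (θ^[n] ω) w = w := by
      intro j
      have := Set.mem_iInter.1 hω j
      have h2 := Set.notMem_compl_iff.1 this
      obtain ⟨w, hw1, hw2⟩ := h2
      exact ⟨w, hw1, hw2⟩
    choose w hwmem hwfix using hwit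
    have hdist : ∀ j, dist (w j) z ≤ 2 * (1/2:ℝ)^j := by
      intro j
      obtain ⟨t, ht⟩ := hball j
      have h1 : dist (w j) t ≤ (1/2:ℝ)^j := Metric.mem_closedBall.1 (ht (hwmem j))
      have h2 : dist z t ≤ (1/2:ℝ)^j := Metric.mem_closedBall.1 (ht (Set.mem_iInter.1 hz (j+1)))
      calc dist (w j) z ≤ dist (w j) t + dist t z := dist_triangle _ _ _
        _ ≤ (1/2:ℝ)^j + (1/2:ℝ)^j := by rw [dist_comm t z]; exact add_le_add h1 h2
        _ = 2 * (1/2:ℝ)^j := by ring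
    have hconv : Tendsto w atTop (nhds z) := by
      rw [tendsto_iff_dist_tendsto_zero]
      refine squeeze_zero (fun j => dist_nonneg) hdist ?_
      have := tendsto_pow_atTop_nhds_zero_of_lt_one (by norm_num : (0:ℝ) ≤ 1/2)
        (by norm_num : (1/2:ℝ) < 1)
      have := this.const_mul (2:ℝ)
      simpa using this
    have hlim : Tendsto (fun j => f ω (w j)) atTop (nhds (f ω z)) :=
      (hcont ω).continuousAt.tendsto.comp hconv
    have h0 : (fun j => f ω (w j)) = w := by
      funext j
      have := hwfix j 0
      simpa using this
    rw [h0] at hlim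
    exact tendsto_nhds_unique hlim hconv
  have hfinal : ℙ {ω | f ω z = z} = 1 := by
    refine le_antisymm prob_le_one ?_
    have h1 : ℙ ((⋃ j, (fixedOrbitSet θ f (seq (j+1)).1)ᶜ)ᶜ) = 1 := by
      rw [measure_compl (MeasurableSet.iUnion fun j => (hEm (j+1)).compl)
        (measure_ne_top _ _), hcompl0]
      simp
    rw [← h1]
    exact measure_mono hsub2
  exact hdisj z hzK hfinal

lemma exists_good_set (hθ : Ergodic θ ℙ) (hmeas : Measurable (Function.uncurry f))
    (hcont : ∀ ω, Continuous (f ω))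
    (hpara : ∀ ω, ∀ x y : M, f ω x = x → f ω y ≠ y → dist (f ω y) x < dist y x)
    (C : Set M) (hCc : IsClosed C) (hCne : C.Nonempty)
    (hCmem : ∀ z : M, ℙ {ω | f ω z = z} = 1 → z ∈ C)
    (haefix : ∀ᵐ ω ∂ℙ, ∀ (n : ℕ), ∀ c ∈ C, f (θ^[n] ω) c = c)
    (S : Set M) (hS : IsCompact S) (hSne : S.Nonempty) (hSC : ∀ z ∈ S, z ∉ C) :
    ∃ (m : ℕ) (ε : ℝ), 0 < ε ∧ ∃ A : Set Ω, MeasurableSet A ∧ ℙ A ≠ 0 ∧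
      ∀ ω ∈ A, ∀ z ∈ S, ∃ j, j ≤ m ∧
        Metric.infDist (randIter θ f j ω z) C ≤ Metric.infDist z C - ε := by
  classical
  obtain ⟨T, hTmem, hTdense⟩ := RandParacontraction.exists_denseSeq_subset S hSne
  set A : ℕ → ℕ → Set Ω := fun m k => ⋂ i : ℕ,
    {ω | ∃ j, j ≤ m ∧ Metric.infDist (randIter θ f j ω (T i)) C ≤
      Metric.infDist (T i) C - 1/(k+1)} with hA
  have hAmeas : ∀ m k, MeasurableSet (A m k) := by
    intro m k
    refine MeasurableSet.iInter fun i => ?_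
    have heq : {ω | ∃ j, j ≤ m ∧ Metric.infDist (randIter θ f j ω (T i)) C ≤
        Metric.infDist (T i) C - 1/(k+1)} =
        ⋃ j ∈ Finset.range (m+1), {ω | Metric.infDist (randIter θ f j ω (T i)) C ≤
          Metric.infDist (T i) C - 1/(k+1)} := by
      ext ω
      simp only [Set.mem_setOf_eq, Set.mem_iUnion, Finset.mem_range, Nat.lt_succ_iff,
        exists_prop]
    rw [heq]
    refine MeasurableSet.biUnion (Finset.range (m+1)).countable_toSet fun j _ => ?_
    have hmble : Measurable fun ω => Metric.infDist (randIter θ f j ω (T i)) C := by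
      have h1 : Measurable fun ω => randIter θ f j ω (T i) :=
        (RandParacontraction.measurable_randIter θ hθ.measurable f hmeas j).comp
          (measurable_id.prodMk measurable_const)
      exact (Metric.continuous_infDist_pt C).measurable.comp h1
    exact measurableSet_le hmble measurable_const
  have hAgood : ∀ m k (ω : Ω), ω ∈ A m k → ∀ z ∈ S, ∃ j, j ≤ m ∧
      Metric.infDist (randIter θ f j ω z) C ≤ Metric.infDist z C - 1/(k+1) := by
    intro m k ω hω z hz
    have hch : ∀ l : ℕ, ∃ i, dist (T i) z < 1/(l+1) :=
      fun l => hTdense z hz _ (by positivity)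
    choose idx hidx using hch
    have hjj : ∀ l : ℕ, ∃ j, j ≤ m ∧ Metric.infDist (randIter θ f j ω (T (idx l))) C ≤
        Metric.infDist (T (idx l)) C - 1/(k+1) := fun l => Set.mem_iInter.1 hω (idx l)
    choose jj hjle hjP using hjj
    set gl : ℕ → Fin (m+1) := fun l => ⟨jj l, Nat.lt_succ_of_le (hjle l)⟩ with hgl
    obtain ⟨jf, hinf⟩ := Finite.exists_infinite_fiber gl
    have hinf' : (gl ⁻¹' {jf}).Infinite := Set.infinite_coe_iff.1 hinf
    have hub : ∀ L : ℕ, ∃ l, l ∈ gl ⁻¹' {jf} ∧ L ≤ l := by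
      intro L
      by_contra hcon
      push_neg at hcon
      refine hinf' (Set.Finite.subset (Set.finite_Iio L) ?_)
      intro l hl
      exact hcon l hl
    choose u hu1 hu2 using hub
    have hwconv : Tendsto (fun L => T (idx (u L))) atTop (nhds z) := by
      rw [tendsto_iff_dist_tendsto_zero]
      refine squeeze_zero (fun L => dist_nonneg) (fun L => ?_)
        tendsto_one_div_add_atTop_nhds_zero_nat
      have h1 : dist (T (idx (u L))) z ≤ 1/((u L : ℝ)+1) := (hidx (u L)).le
      have h2 : (1:ℝ)/((u L : ℝ)+1) ≤ 1/((L:ℝ)+1) := by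
        apply one_div_le_one_div_of_le
        · positivity
        · have := hu2 L
          have : (L:ℝ) ≤ (u L : ℝ) := Nat.cast_le.2 this
          linarith
      linarith
    have hcont2 : Continuous fun w =>
        Metric.infDist (randIter θ f (jf : ℕ) ω w) C - Metric.infDist w C :=
      ((Metric.continuous_infDist_pt C).comp
        (RandParacontraction.continuous_randIter θ f hcont (jf : ℕ) ω)).sub
        (Metric.continuous_infDist_pt C)
    have hlim := hcont2.continuousAt.tendsto.comp hwconv
    have hterm : ∀ L, Metric.infDist (randIter θ f (jf:ℕ) ω (T (idx (u L)))) C -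
        Metric.infDist (T (idx (u L))) C ≤ -(1/(k+1)) := by
      intro L
      have hfib : gl (u L) = jf := hu1 L
      have hval : jj (u L) = (jf : ℕ) := by rw [← hfib]
      have := hjP (u L)
      rw [hval] at this
      linarith
    have hfin : Metric.infDist (randIter θ f (jf:ℕ) ω z) C - Metric.infDist z C ≤
        -(1/(k+1)) := le_of_tendsto hlim (Filter.Eventually.of_forall hterm)
    exact ⟨jf, Nat.lt_succ_iff.1 jf.2, by linarith⟩
  have hnullE : ℙ (fixedOrbitSet θ f S) = 0 :=
    fixedOrbitSet_null ℙ θ f hθ hmeas hcont S hS (fun z hz h1 => hSC z hz (hCmem z h1))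
  have haeE : ∀ᵐ ω ∂ℙ, ω ∉ fixedOrbitSet θ f S := by
    rw [ae_iff]
    simpa using hnullE
  have hC1 : ∀ᵐ ω ∂ℙ, ∃ m k : ℕ, ω ∈ A m k := by
    filter_upwards [haefix, haeE] with ω hfix hnotE
    have hstep : ∀ (z : M) (n : ℕ), Metric.infDist (randIter θ f (n+1) ω z) C ≤
        Metric.infDist (randIter θ f n ω z) C := by
      intro z n
      exact infDist_step_le C hCne (fun c hc => hfix n c hc) (hpara (θ^[n] ω)) _
    have hmono : ∀ z : M, Antitone fun n => Metric.infDist (randIter θ f n ω z) C :=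
      fun z => antitone_nat_of_succ_le (hstep z)
    have hexm : ∃ m : ℕ, ∀ z ∈ S, ∃ j, j ≤ m ∧
        Metric.infDist (randIter θ f j ω z) C < Metric.infDist z C := by
      by_contra hcon
      push_neg at hcon
      have hcon' : ∀ m : ℕ, ∃ z ∈ S, ∀ j, j ≤ m →
          Metric.infDist z C ≤ Metric.infDist (randIter θ f j ω z) C := by
        intro m
        obtain ⟨z, hz, hj⟩ := hcon m
        exact ⟨z, hz, hj⟩
      choose zm hzmS hzm using hcon'
      obtain ⟨zs, hzsS, φ, hφ, hconv⟩ := hS.tendsto_subseq hzmS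
      have heq : ∀ j, Metric.infDist (randIter θ f j ω zs) C = Metric.infDist zs C := by
        intro j
        refine le_antisymm ?_ ?_
        · have := hmono zs (Nat.zero_le j)
          exact this
        · have h1 : Tendsto (fun r => Metric.infDist (randIter θ f j ω (zm (φ r))) C)
              atTop (nhds (Metric.infDist (randIter θ f j ω zs) C)) :=
            (((Metric.continuous_infDist_pt C).comp
              (RandParacontraction.continuous_randIter θ f hcont j ω)).continuousAt.tendsto).comp hconv
          have h2 : Tendsto (fun r => Metric.infDist (zm (φ r)) C) atTop
              (nhds (Metric.infDist zs C)) :=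
            ((Metric.continuous_infDist_pt C).continuousAt.tendsto).comp hconv
          have hfe : ∀ᶠ r in atTop, Metric.infDist (zm (φ r)) C ≤
              Metric.infDist (randIter θ f j ω (zm (φ r))) C := by
            filter_upwards [eventually_ge_atTop j] with r hr
            exact hzm (φ r) j (le_trans hr (hφ.le_apply))
          exact le_of_tendsto_of_tendsto h2 h1 hfe
      have hfixz : ∀ j, randIter θ f j ω zs = zs := by
        intro j
        induction j with
        | zero => rfl
        | succ j ih =>
          by_cases hne : f (θ^[j] ω) (randIter θ f j ω zs) = randIter θ f j ω zs
          · show f (θ^[j] ω) (randIter θ f j ω zs) = zs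
            rw [hne, ih]
          · exfalso
            have hlt := infDist_step_lt C hCc hCne (fun c hc => hfix j c hc)
              (hpara (θ^[j] ω)) (randIter θ f j ω zs) hne
            have h1 : Metric.infDist (randIter θ f (j+1) ω zs) C <
                Metric.infDist (randIter θ f j ω zs) C := hlt
            rw [heq j, heq (j+1)] at h1
            exact lt_irrefl _ h1
      refine hnotE ⟨zs, hzsS, fun n => ?_⟩
      have h1 := hfixz (n+1)
      show f (θ^[n] ω) zs = zs
      calc f (θ^[n] ω) zs = f (θ^[n] ω) (randIter θ f n ω zs) := by rw [hfixz n]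
        _ = randIter θ f (n+1) ω zs := rfl
        _ = zs := h1
    obtain ⟨m, hm⟩ := hexm
    set G : ℕ → M → ℝ := fun j => Nat.rec (fun _ => (0:ℝ))
      (fun j' Gj z => min (Gj z)
        (Metric.infDist (randIter θ f (j'+1) ω z) C - Metric.infDist z C)) j with hG
    have hG0 : ∀ z, G 0 z = 0 := fun _ => rfl
    have hGsucc : ∀ j z, G (j+1) z = min (G j z)
        (Metric.infDist (randIter θ f (j+1) ω z) C - Metric.infDist z C) := fun _ _ => rfl
    have hGcont : ∀ j, Continuous (G j) := by
      intro j
      induction j with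
      | zero => exact continuous_const
      | succ j ih =>
        have h1 : Continuous fun z =>
            Metric.infDist (randIter θ f (j+1) ω z) C - Metric.infDist z C :=
          ((Metric.continuous_infDist_pt C).comp
            (RandParacontraction.continuous_randIter θ f hcont (j+1) ω)).sub
            (Metric.continuous_infDist_pt C)
        exact ih.min h1
    have hGle : ∀ mm j, j ≤ mm → ∀ z, G mm z ≤
        Metric.infDist (randIter θ f j ω z) C - Metric.infDist z C := by
      intro mm
      induction mm with
      | zero =>
        intro j hj z
        have hj0 : j = 0 := Nat.le_zero.1 hj
        subst hj0
        rw [hG0]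
        have : randIter θ f 0 ω z = z := rfl
        rw [this]
        simp
      | succ mm ih =>
        intro j hj z
        by_cases hjm : j ≤ mm
        · calc G (mm+1) z ≤ G mm z := by rw [hGsucc]; exact min_le_left _ _
            _ ≤ _ := ih j hjm z
        · have : j = mm + 1 := by omega
          subst this
          rw [hGsucc]
          exact min_le_right _ _
    have hGex : ∀ mm z, ∃ j, j ≤ mm ∧ G mm z =
        Metric.infDist (randIter θ f j ω z) C - Metric.infDist z C := by
      intro mm
      induction mm with
      | zero =>
        intro z
        refine ⟨0, le_rfl, ?_⟩
        rw [hG0]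
        have : randIter θ f 0 ω z = z := rfl
        rw [this]
        simp
      | succ mm ih =>
        intro z
        rcases le_or_gt (G mm z)
          (Metric.infDist (randIter θ f (mm+1) ω z) C - Metric.infDist z C) with h | h
        · obtain ⟨j, hj, hjeq⟩ := ih z
          refine ⟨j, le_trans hj (Nat.le_succ mm), ?_⟩
          rw [hGsucc, min_eq_left h, hjeq]
        · refine ⟨mm+1, le_rfl, ?_⟩
          rw [hGsucc, min_eq_right h.le]
    obtain ⟨z0, hz0S, hmax⟩ := hS.exists_isMaxOn hSne (hGcont m).continuousOn
    have hneg : G m z0 < 0 := by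
      obtain ⟨j, hj, hjlt⟩ := hm z0 hz0S
      exact lt_of_le_of_lt (hGle m j hj z0) (by linarith)
    obtain ⟨k, hk⟩ := exists_nat_one_div_lt (show (0:ℝ) < -(G m z0) by linarith)
    refine ⟨m, k, Set.mem_iInter.2 fun i => ?_⟩
    obtain ⟨j, hj, hjeq⟩ := hGex m (T i)
    refine ⟨j, hj, ?_⟩
    have h1 : G m (T i) ≤ G m z0 := hmax (hTmem i)
    rw [hjeq] at h1
    have h2 : (1:ℝ)/(k+1) < -(G m z0) := hk
    linarith
  have hpos : ∃ m k : ℕ, ℙ (A m k) ≠ 0 := by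
    by_contra hall
    push_neg at hall
    have hnull2 : ℙ (⋃ (m : ℕ) (k : ℕ), A m k) = 0 :=
      measure_iUnion_null fun m => measure_iUnion_null fun k => hall m k
    have h1 : ℙ {ω | ¬ ∃ m k : ℕ, ω ∈ A m k} = 0 := by
      rw [← ae_iff]
      exact hC1
    have huniv : (Set.univ : Set Ω) ⊆ (⋃ (m : ℕ) (k : ℕ), A m k) ∪
        {ω | ¬ ∃ m k : ℕ, ω ∈ A m k} := by
      intro ω _
      by_cases h : ∃ m k : ℕ, ω ∈ A m k
      · obtain ⟨m, k, hmk⟩ := h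
        exact Or.inl (Set.mem_iUnion.2 ⟨m, Set.mem_iUnion.2 ⟨k, hmk⟩⟩)
      · exact Or.inr h
    have := measure_mono (μ := ℙ) huniv
    have hle := le_trans this (measure_union_le _ _)
    rw [hnull2, h1] at hle
    simp at hle
  obtain ⟨m, k, hmk⟩ := hpos
  exact ⟨m, 1/(k+1), by positivity, A m k, hAmeas m k, hmk, hAgood m k⟩

end Fixed

end RandParacontraction

/-- Main theorem: a random iteration of paracontractions driven by an ergodic
measure-preserving dynamical system converges a.s. to a point of the set C of
almost surely common fixed points, provided C is non-empty. -/
theorem random_iteration_paracontractions_converges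
    {Ω : Type*} [MeasurableSpace Ω] (ℙ : Measure Ω) [IsProbabilityMeasure ℙ]
    (θ : Ω → Ω) (hθ : Ergodic θ ℙ)
    {M : Type*} [MetricSpace M] [TopologicalSpace.SeparableSpace M] [ProperSpace M]
    [MeasurableSpace M] [BorelSpace M]
    (f : Ω → M → M)
    (hmeas : Measurable (Function.uncurry f))
    (hcont : ∀ ω, Continuous (f ω))
    (hpara : ∀ ω, ∀ x y : M, f ω x = x → f ω y ≠ y → dist (f ω y) x < dist y x)
    (C : Set M) (hCdef : C = {x : M | ℙ {ω | f ω x = x} = 1})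
    (hCne : C.Nonempty) :
    ∀ x : M, ∀ᵐ ω ∂ℙ, ∃ c ∈ C,
      Tendsto (fun n => randIter θ f n ω x) atTop (nhds c) := by
  intro x
  classical
  obtain ⟨c₀, hc₀⟩ := hCne
  have hCne : C.Nonempty := ⟨c₀, hc₀⟩
  have hCfix : ∀ c ∈ C, ℙ {ω | f ω c = c} = 1 := by
    intro c hc; rw [hCdef] at hc; exact hc
  have hCmem : ∀ z : M, ℙ {ω | f ω z = z} = 1 → z ∈ C := by
    intro z hz; rw [hCdef]; exact hz
  have hCc : IsClosed C := RandParacontraction.isClosed_fixedSet ℙ f hmeas hcont C hCdef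
  have haefix := RandParacontraction.ae_fix_all ℙ θ f hθ hmeas hcont C hCne hCfix
  set R := dist x c₀ with hR
  set S : ℕ → Set M := fun q =>
    {z | dist z c₀ ≤ R ∧ 1/((q:ℝ)+1) ≤ Metric.infDist z C} with hSdef
  have hScompact : ∀ q, IsCompact (S q) := by
    intro q
    have h1 : IsClosed {z : M | dist z c₀ ≤ R} :=
      isClosed_le (continuous_id.dist continuous_const) continuous_const
    have h2 : IsClosed {z : M | 1/((q:ℝ)+1) ≤ Metric.infDist z C} :=
      isClosed_le continuous_const (Metric.continuous_infDist_pt C)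
    have heq : S q = {z : M | dist z c₀ ≤ R} ∩
        {z : M | 1/((q:ℝ)+1) ≤ Metric.infDist z C} := rfl
    have hclosed : IsClosed (S q) := by rw [heq]; exact h1.inter h2
    refine IsCompact.of_isClosed_subset (isCompact_closedBall c₀ R) hclosed ?_
    intro z hz
    exact Metric.mem_closedBall.2 hz.1
  have hSC : ∀ q, ∀ z ∈ S q, z ∉ C := by
    intro q z hz hzC
    have h0 : Metric.infDist z C = 0 := Metric.infDist_zero_of_mem hzC
    have h1 := hz.2
    rw [h0] at h1
    have h2 : (0:ℝ) < 1/((q:ℝ)+1) := by positivity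
    linarith
  have hq : ∀ q : ℕ, ∀ᵐ ω ∂ℙ, (S q).Nonempty → ∃ (m : ℕ) (ε : ℝ), 0 < ε ∧
      ∀ N : ℕ, ∃ n, N ≤ n ∧ ∀ z ∈ S q, ∃ j, j ≤ m ∧
        Metric.infDist (randIter θ f j (θ^[n] ω) z) C ≤ Metric.infDist z C - ε := by
    intro q
    by_cases hne : (S q).Nonempty
    · obtain ⟨m, ε, hε, A, hAmeas, hAne, hAgood⟩ :=
        RandParacontraction.exists_good_set ℙ θ f hθ hmeas hcont hpara C hCc hCne hCmem
          haefix (S q) (hScompact q) hne (hSC q)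
      have hrec := RandParacontraction.ergodic_recurrence ℙ hθ hAmeas hAne
      filter_upwards [hrec] with ω hω _
      refine ⟨m, ε, hε, fun N => ?_⟩
      obtain ⟨n, hn, hmem⟩ := hω N
      exact ⟨n, hn, hAgood _ hmem⟩
    · filter_upwards with ω h
      exact absurd h hne
  have hqall : ∀ᵐ ω ∂ℙ, ∀ q : ℕ, (S q).Nonempty → ∃ (m : ℕ) (ε : ℝ), 0 < ε ∧
      ∀ N : ℕ, ∃ n, N ≤ n ∧ ∀ z ∈ S q, ∃ j, j ≤ m ∧
        Metric.infDist (randIter θ f j (θ^[n] ω) z) C ≤ Metric.infDist z C - ε :=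
    ae_all_iff.2 hq
  filter_upwards [haefix, hqall] with ω hfix hgood
  set xn : ℕ → M := fun n => randIter θ f n ω x with hxn
  have hdiststep : ∀ (c : M), c ∈ C → ∀ n, dist (xn (n+1)) c ≤ dist (xn n) c := by
    intro c hc n
    exact RandParacontraction.dist_step C (fun c' hc' => hfix n c' hc')
      (hpara (θ^[n] ω)) (xn n) hc
  have hdistmono : ∀ c ∈ C, Antitone fun n => dist (xn n) c :=
    fun c hc => antitone_nat_of_succ_le (hdiststep c hc)
  have hinfmono : Antitone fun n => Metric.infDist (xn n) C :=
    antitone_nat_of_succ_le (fun n => RandParacontraction.infDist_step_le C hCne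
      (fun c hc => hfix n c hc) (hpara (θ^[n] ω)) (xn n))
  have hball : ∀ n, dist (xn n) c₀ ≤ R := by
    intro n
    have := hdistmono c₀ hc₀ (Nat.zero_le n)
    exact this
  have hzero : ∀ q : ℕ, ∃ n, Metric.infDist (xn n) C < 1/((q:ℝ)+1) := by
    intro q
    by_contra hcon
    push_neg at hcon
    have hmemS : ∀ n, xn n ∈ S q := fun n => ⟨hball n, hcon n⟩
    have hSne : (S q).Nonempty := ⟨x, hmemS 0⟩
    obtain ⟨m, ε, hε, hrec⟩ := hgood q hSne
    have hiter : ∀ r : ℕ, ∃ n, Metric.infDist (xn n) C ≤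
        Metric.infDist x C - (r : ℝ) * ε := by
      intro r
      induction r with
      | zero =>
        refine ⟨0, ?_⟩
        have h0 : xn 0 = x := rfl
        rw [h0]
        simp
      | succ r ih =>
        obtain ⟨n, hn⟩ := ih
        obtain ⟨n', hn', hgood'⟩ := hrec n
        obtain ⟨j, hj, hdec⟩ := hgood' (xn n') (hmemS n')
        refine ⟨n' + j, ?_⟩
        have hcomp : randIter θ f j (θ^[n'] ω) (xn n') = xn (n' + j) :=
          RandParacontraction.randIter_add θ f n' j ω x
        rw [hcomp] at hdec
        have hmono2 : Metric.infDist (xn n') C ≤ Metric.infDist (xn n) C := hinfmono hn'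
        push_cast
        linarith
    obtain ⟨r, hr⟩ := exists_nat_gt (Metric.infDist x C / ε)
    obtain ⟨n, hn⟩ := hiter r
    have h1 : Metric.infDist x C < (r:ℝ) * ε := by
      rw [div_lt_iff₀ hε] at hr
      linarith
    have h2 : (0:ℝ) ≤ Metric.infDist (xn n) C := Metric.infDist_nonneg
    linarith
  have htendzero : Tendsto (fun n => Metric.infDist (xn n) C) atTop (nhds 0) := by
    rw [Metric.tendsto_atTop]
    intro ε hε
    obtain ⟨q, hq'⟩ := exists_nat_one_div_lt hε
    obtain ⟨n₀, hn₀⟩ := hzero q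
    refine ⟨n₀, fun n hn => ?_⟩
    have h1 : Metric.infDist (xn n) C ≤ Metric.infDist (xn n₀) C := hinfmono hn
    have h2 : (0:ℝ) ≤ Metric.infDist (xn n) C := Metric.infDist_nonneg
    rw [Real.dist_eq, sub_zero, abs_of_nonneg h2]
    linarith
  obtain ⟨y, hymem, φ, hφ, hconv⟩ := (isCompact_closedBall c₀ R).tendsto_subseq
    (fun n => Metric.mem_closedBall.2 (hball n))
  have hyC : y ∈ C := by
    have h1 : Tendsto (fun r => Metric.infDist (xn (φ r)) C) atTop
        (nhds (Metric.infDist y C)) :=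
      ((Metric.continuous_infDist_pt C).continuousAt.tendsto).comp hconv
    have h2 : Tendsto (fun r => Metric.infDist (xn (φ r)) C) atTop (nhds 0) :=
      htendzero.comp hφ.tendsto_atTop
    have h3 : Metric.infDist y C = 0 := tendsto_nhds_unique h1 h2
    exact (hCc.mem_iff_infDist_zero hCne).2 h3
  have hsubconv : Tendsto (fun r => dist (xn (φ r)) y) atTop (nhds 0) :=
    tendsto_iff_dist_tendsto_zero.1 hconv
  have hdisty : Tendsto (fun n => dist (xn n) y) atTop (nhds 0) := by
    rw [Metric.tendsto_atTop]
    intro ε hε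
    obtain ⟨r₀, hr₀⟩ := Metric.tendsto_atTop.1 hsubconv ε hε
    refine ⟨φ r₀, fun n hn => ?_⟩
    have h1 : dist (xn n) y ≤ dist (xn (φ r₀)) y := hdistmono y hyC hn
    have h2 := hr₀ r₀ le_rfl
    rw [Real.dist_eq, sub_zero, abs_of_nonneg dist_nonneg] at h2
    rw [Real.dist_eq, sub_zero, abs_of_nonneg dist_nonneg]
    linarith
  exact ⟨y, hyC, tendsto_iff_dist_tendsto_zero.2 hdisty⟩
end
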